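/- There exists a constant M > 0 such that for every r > 0 and every a ∈ [−1, 1], Σ_{n ∈ ℤ, n ≠ 0} exp(−(a+2n)²/(4r)) / √(4πr) ≤ M. -/

import Mathlib

open Real

lemma aux_partial_sum (r : ℝ) (hr : 0 < r) (a : ℝ) (ha : a ∈ Set.Icc (-1 : ℝ) 1) (N : ℕ) :
    ∑ n ∈ Finset.range N, Real.exp (-(a + 2 * (n + 1)) ^ 2 / (4 * r))
      ≤ Real.sqrt (4 * π * r) / 2 := by
  obtain ⟨ha1, ha2⟩ := ha
  set f : ℝ → ℝ := fun x => Real.exp (-x ^ 2 / (4 * r)) with hf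
  have hfeq : f = fun x => Real.exp (-(1 / (4 * r)) * x ^ 2) := by
    funext x; simp only [hf]; ring_nf
  have hfi : MeasureTheory.Integrable f := by
    rw [hfeq]
    exact integrable_exp_neg_mul_sq (by positivity)
  have hfc : Continuous f := by
    rw [hfeq]; continuity
  have hint : ∀ c d : ℝ, IntervalIntegrable f MeasureTheory.volume c d :=
    fun c d => hfc.intervalIntegrable c d
  -- per-term bound
  have hterm : ∀ n : ℕ, Real.exp (-(a + 2 * (n + 1)) ^ 2 / (4 * r))
      ≤ (∫ x in (a + 2 * n)..(a + 2 * (n + 1)), f x) / 2 := by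
    intro n
    rw [le_div_iff₀ (by norm_num : (0:ℝ) < 2)]
    have hconst : (∫ x in (a + 2 * n)..(a + 2 * (n + 1)),
        Real.exp (-(a + 2 * (n + 1)) ^ 2 / (4 * r)))
        = Real.exp (-(a + 2 * (n + 1)) ^ 2 / (4 * r)) * 2 := by
      rw [intervalIntegral.integral_const]
      push_cast
      ring_nf
    rw [← hconst]
    apply intervalIntegral.integral_mono_on (by push_cast; linarith)
      (intervalIntegrable_const) (hint _ _)
    intro x hx
    obtain ⟨hx1, hx2⟩ := hx
    apply Real.exp_le_exp.2
    have hsq : x ^ 2 ≤ (a + 2 * ((n : ℝ) + 1)) ^ 2 := by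
      have hn : (0:ℝ) ≤ (n:ℝ) := Nat.cast_nonneg n
      apply sq_le_sq' (by linarith) (by linarith)
    exact (div_le_div_iff_of_pos_right (by positivity : (0:ℝ) < 4 * r)).2 (neg_le_neg hsq)
  -- sum the per-term bounds
  calc ∑ n ∈ Finset.range N, Real.exp (-(a + 2 * (n + 1)) ^ 2 / (4 * r))
      ≤ ∑ n ∈ Finset.range N, (∫ x in (a + 2 * n)..(a + 2 * (n + 1)), f x) / 2 :=
        Finset.sum_le_sum fun n _ => hterm n
    _ = (∑ n ∈ Finset.range N, ∫ x in (a + 2 * n)..(a + 2 * (n + 1)), f x) / 2 := by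
        rw [Finset.sum_div]
    _ = (∫ x in a..(a + 2 * N), f x) / 2 := by
        have := intervalIntegral.sum_integral_adjacent_intervals
          (a := fun k : ℕ => a + 2 * k) (n := N)
          (fun k _ => hint _ _) (f := f) (μ := MeasureTheory.volume)
        simp only [Nat.cast_zero, mul_zero, add_zero] at this
        rw [← this]
        congr 1
        apply Finset.sum_congr rfl
        intro k _
        push_cast
        ring_nf
    _ ≤ (∫ x : ℝ, f x) / 2 := by
        gcongr
        rw [intervalIntegral.integral_of_le
          (by have := Nat.cast_nonneg (α := ℝ) N; linarith)]
        exact MeasureTheory.setIntegral_le_integral hfi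
          (Filter.Eventually.of_forall fun x => (Real.exp_pos _).le)
    _ = Real.sqrt (4 * π * r) / 2 := by
        congr 1
        rw [hfeq, integral_gaussian]
        congr 1
        field_simp

theorem stmt_9 :
    ∃ M > (0 : ℝ), ∀ r > (0 : ℝ), ∀ a ∈ Set.Icc (-1 : ℝ) 1,
      (∑' n : {n : ℤ // n ≠ 0},
          Real.exp (-(a + 2 * ((n : ℤ) : ℝ)) ^ 2 / (4 * r)) / Real.sqrt (4 * π * r))
        ≤ M := by
  refine ⟨1, one_pos, fun r hr a ha => ?_⟩
  have hc : (0:ℝ) < Real.sqrt (4 * π * r) := Real.sqrt_pos.2 (by positivity)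
  rw [tsum_div_const, div_le_one hc]
  set g : ℤ → ℝ := Set.indicator {n : ℤ | n ≠ 0}
    (fun n => Real.exp (-(a + 2 * (n : ℝ)) ^ 2 / (4 * r))) with hg
  have hgpos : ∀ n : ℕ, g (n + 1) = Real.exp (-(a + 2 * ((n:ℝ) + 1)) ^ 2 / (4 * r)) := by
    intro n
    rw [hg, Set.indicator_of_mem (by simp [Set.mem_setOf_eq]; omega)]
    push_cast
    ring_nf
  have hgneg : ∀ n : ℕ, g (-(n + 1)) = Real.exp (-(-a + 2 * ((n:ℝ) + 1)) ^ 2 / (4 * r)) := by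
    intro n
    rw [hg, Set.indicator_of_mem (by simp [Set.mem_setOf_eq]; omega)]
    push_cast
    ring_nf
  have hma : -a ∈ Set.Icc (-1:ℝ) 1 := by
    obtain ⟨h1, h2⟩ := ha; exact ⟨by linarith, by linarith⟩
  have hranpos : ∀ N, ∑ n ∈ Finset.range N, g (n + 1) ≤ Real.sqrt (4 * π * r) / 2 := by
    intro N
    simp_rw [hgpos]
    exact aux_partial_sum r hr a ha N
  have hranneg : ∀ N, ∑ n ∈ Finset.range N, g (-(n + 1)) ≤ Real.sqrt (4 * π * r) / 2 := by
    intro N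
    simp_rw [hgneg]
    exact aux_partial_sum r hr (-a) hma N
  have hnn : ∀ n : ℤ, 0 ≤ g n := fun n =>
    Set.indicator_nonneg (fun m _ => (Real.exp_pos _).le) n
  have hsumpos : Summable fun n : ℕ => g (n + 1) :=
    summable_of_sum_range_le (fun n => hnn _) hranpos
  have hsumneg : Summable fun n : ℕ => g (-(n + 1)) :=
    summable_of_sum_range_le (fun n => hnn _) hranneg
  have hsplit := tsum_of_add_one_of_neg_add_one hsumpos hsumneg
  have heq : (∑' n : {n : ℤ // n ≠ 0},
      Real.exp (-(a + 2 * ((n : ℤ) : ℝ)) ^ 2 / (4 * r))) = ∑' n : ℤ, g n := by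
    rw [hg]
    exact tsum_subtype {n : ℤ | n ≠ 0} (fun n => Real.exp (-(a + 2 * (n : ℝ)) ^ 2 / (4 * r)))
  rw [heq, hsplit]
  have h0 : g 0 = 0 := by rw [hg]; simp
  have t1 : (∑' n : ℕ, g (n + 1)) ≤ Real.sqrt (4 * π * r) / 2 :=
    Real.tsum_le_of_sum_range_le (fun n => hnn _) hranpos
  have t2 : (∑' n : ℕ, g (-(n + 1))) ≤ Real.sqrt (4 * π * r) / 2 :=
    Real.tsum_le_of_sum_range_le (fun n => hnn _) hranneg
  rw [h0]
  linarith
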